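/- arXiv:2602.01636 — 3 statements merged into one kernel-verified Lean document; each statement's English description precedes it below -/
import Mathlib

section
/- Let V and W be real Banach spaces, let U ⊆ V be open, let ũ ∈ U and ρ > 0 be such that the closed ball B_ρ := {w ∈ V : ‖w − ũ‖ ≤ ρ} is contained in U. Let F : V → W be Fréchet differentiable on U. Assume: (i) ‖F(ũ)‖ ≤ r for some r ≥ 0; (ii) DF(ũ) is a continuous linear isomorphism from V onto W whose inverse satisfies ‖DF(ũ)⁻¹‖ ≤ 1/α for some α > 0; (iii) there is L > 0 with ‖DF(w) − DF(z)‖ ≤ L‖w − z‖ for all w, z ∈ B_ρ. Set η := r/α, p := η + (L/(2α))ρ² − ρ and q := (L/α)ρ. If p ≤ 0 and q < 1, then there exists a unique u ∈ B_ρ with F(u) = 0; moreover the Newton map N(w) := w − DF(ũ)⁻¹(F(w)) maps B_ρ into B_ρ and satisfies ‖N(w) − N(z)‖ ≤ q‖w − z‖ for all w, z ∈ B_ρ. -/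
open Metric

/-- Quadratic Taylor bound from a Lipschitz-type bound on the derivative. -/
lemma quad_bound {V W : Type*} [NormedAddCommGroup V] [NormedSpace ℝ V]
    [NormedAddCommGroup W] [NormedSpace ℝ W]
    (U : Set V) (u₀ w : V) (ρ L : ℝ)
    (hball : closedBall u₀ ρ ⊆ U)
    (F : V → W) (DF : V → V →L[ℝ] W)
    (hdiff : ∀ x ∈ U, HasFDerivAt F (DF x) x)
    (hlip : ∀ z ∈ closedBall u₀ ρ, ‖DF z - DF u₀‖ ≤ L * ‖z - u₀‖)
    (hw : w ∈ closedBall u₀ ρ) :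
    ‖F w - F u₀ - DF u₀ (w - u₀)‖ ≤ L / 2 * ‖w - u₀‖ ^ 2 := by
  set v := w - u₀ with hv
  have hvρ : ‖v‖ ≤ ρ := by
    simpa [hv, dist_eq_norm] using hw
  have hmem : ∀ t ∈ Set.Icc (0:ℝ) 1, u₀ + t • v ∈ closedBall u₀ ρ := by
    intro t ht
    have : ‖t • v‖ ≤ ‖v‖ := by
      rw [norm_smul, Real.norm_eq_abs, abs_of_nonneg ht.1]
      nlinarith [norm_nonneg v, ht.1, ht.2]
    simp only [mem_closedBall, dist_eq_norm, add_sub_cancel_left]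
    exact this.trans hvρ
  set g : ℝ → W := fun t => F (u₀ + t • v) - t • (DF u₀ v) - F u₀ with hg
  set g' : ℝ → W := fun t => DF (u₀ + t • v) v - DF u₀ v with hg'
  have hgderiv : ∀ t ∈ Set.Icc (0:ℝ) 1, HasDerivAt g (g' t) t := by
    intro t ht
    have h1 : HasDerivAt (fun s : ℝ => u₀ + s • v) v t := by
      simpa using ((hasDerivAt_id t).smul_const v).const_add u₀
    have h2 : HasDerivAt (fun s : ℝ => F (u₀ + s • v)) (DF (u₀ + t • v) v) t :=
      (hdiff _ (hball (hmem t ht))).comp_hasDerivAt t h1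
    have h3 : HasDerivAt (fun s : ℝ => s • (DF u₀ v)) (DF u₀ v) t := by
      simpa using (hasDerivAt_id t).smul_const (DF u₀ v)
    simpa [hg, hg'] using (h2.sub h3).sub_const (F u₀)
  have key : ∀ x ∈ Set.Icc (0:ℝ) 1, ‖g x‖ ≤ L * ‖v‖ ^ 2 / 2 * x ^ 2 := by
    intro x hx
    refine image_norm_le_of_norm_deriv_right_le_deriv_boundary
      (f := g) (f' := g') (a := 0) (b := 1)
      (B := fun t => L * ‖v‖ ^ 2 / 2 * t ^ 2) (B' := fun t => L * ‖v‖ ^ 2 * t)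
      (fun t ht => (hgderiv t ht).continuousAt.continuousWithinAt)
      (fun t ht => (hgderiv t (Set.mem_Icc_of_Ico ht)).hasDerivWithinAt)
      (by simp [hg]) (fun t => ?_) (fun t ht => ?_) hx
    · have := (hasDerivAt_pow 2 t).const_mul (L * ‖v‖ ^ 2 / 2)
      exact this.congr_deriv (by norm_num; ring)
    · have hb := hlip _ (hmem t (Set.mem_Icc_of_Ico ht))
      have hnorm : ‖(u₀ + t • v) - u₀‖ = t * ‖v‖ := by
        rw [add_sub_cancel_left, norm_smul, Real.norm_eq_abs, abs_of_nonneg ht.1]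
      have h1 : ‖g' t‖ ≤ ‖DF (u₀ + t • v) - DF u₀‖ * ‖v‖ := by
        simpa [hg'] using (DF (u₀ + t • v) - DF u₀).le_opNorm v
      calc ‖g' t‖ ≤ (L * (t * ‖v‖)) * ‖v‖ := by
            refine h1.trans (mul_le_mul_of_nonneg_right ?_ (norm_nonneg v))
            rw [← hnorm]; exact hb
        _ = L * ‖v‖ ^ 2 * t := by ring
  have h1 := key 1 (by norm_num)
  have : g 1 = F w - F u₀ - DF u₀ v := by simp [hg, hv, map_sub]; abel
  rw [this] at h1
  calc ‖F w - F u₀ - DF u₀ (w - u₀)‖ = ‖F w - F u₀ - DF u₀ v‖ := by rw [hv]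
    _ ≤ L * ‖v‖ ^ 2 / 2 * 1 ^ 2 := h1
    _ = L / 2 * ‖w - u₀‖ ^ 2 := by rw [hv]; ring

/-- Verified existence and localisation via Newton–Kantorovich (Theorem 3.2). -/
theorem stmt_1
    {V W : Type*} [NormedAddCommGroup V] [NormedSpace ℝ V] [CompleteSpace V]
    [NormedAddCommGroup W] [NormedSpace ℝ W] [CompleteSpace W]
    (U : Set V) (hU : IsOpen U)
    (u₀ : V) (hu₀ : u₀ ∈ U) (ρ : ℝ) (hρ : 0 < ρ)
    (hball : closedBall u₀ ρ ⊆ U)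
    (F : V → W) (DF : V → V →L[ℝ] W)
    (hdiff : ∀ x ∈ U, HasFDerivAt F (DF x) x)
    (r α L : ℝ) (hr : 0 ≤ r) (hα : 0 < α) (hL : 0 < L)
    (hres : ‖F u₀‖ ≤ r)
    (e : V ≃L[ℝ] W) (he : (e : V →L[ℝ] W) = DF u₀)
    (hinv : ‖(e.symm : W →L[ℝ] V)‖ ≤ 1 / α)
    (hlip : ∀ w ∈ closedBall u₀ ρ, ∀ z ∈ closedBall u₀ ρ,
      ‖DF w - DF z‖ ≤ L * ‖w - z‖)
    (hp : r / α + L / (2 * α) * ρ ^ 2 - ρ ≤ 0)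
    (hq : L / α * ρ < 1) :
    (∃! u, u ∈ closedBall u₀ ρ ∧ F u = 0) ∧
    (∀ w ∈ closedBall u₀ ρ, w - e.symm (F w) ∈ closedBall u₀ ρ) ∧
    (∀ w ∈ closedBall u₀ ρ, ∀ z ∈ closedBall u₀ ρ,
      ‖(w - e.symm (F w)) - (z - e.symm (F z))‖ ≤ (L / α * ρ) * ‖w - z‖) := by
  have hu₀mem : u₀ ∈ closedBall u₀ ρ := mem_closedBall_self hρ.le
  set N : V → V := fun w => w - e.symm (F w) with hN
  -- rewriting N w - N z through e.symm
  have hNdiff : ∀ w z : V, N w - N z = e.symm (DF u₀ (w - z) - (F w - F z)) := by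
    intro w z
    have h1 : e.symm (DF u₀ (w - z)) = w - z := by
      rw [← he]; exact e.symm_apply_apply _
    rw [map_sub, h1, map_sub]
    simp [hN]; abel
  -- contraction estimate
  have hcontr : ∀ w ∈ closedBall u₀ ρ, ∀ z ∈ closedBall u₀ ρ,
      ‖N w - N z‖ ≤ (L / α * ρ) * ‖w - z‖ := by
    intro w hw z hz
    rw [hNdiff]
    have hb : ‖F w - F z - DF u₀ (w - z)‖ ≤ (L * ρ) * ‖w - z‖ := by
      refine Convex.norm_image_sub_le_of_norm_hasFDerivWithin_le'
        (f := F) (f' := DF) (φ := DF u₀) (C := L * ρ)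
        (fun x hx => (hdiff x (hball hx)).hasFDerivWithinAt)
        (fun x hx => ?_) (convex_closedBall u₀ ρ) hz hw
      refine (hlip x hx u₀ hu₀mem).trans ?_
      have : ‖x - u₀‖ ≤ ρ := by simpa [dist_eq_norm] using hx
      nlinarith
    have h2 : ‖(e.symm : W →L[ℝ] V) (DF u₀ (w - z) - (F w - F z))‖
        ≤ (1 / α) * ((L * ρ) * ‖w - z‖) := by
      refine ((e.symm : W →L[ℝ] V).le_opNorm _).trans ?_
      have hnn : ‖DF u₀ (w - z) - (F w - F z)‖ = ‖F w - F z - DF u₀ (w - z)‖ := by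
        rw [← norm_neg]; congr 1; abel
      rw [hnn]
      have h0 : (0:ℝ) ≤ ‖F w - F z - DF u₀ (w - z)‖ := norm_nonneg _
      exact mul_le_mul hinv hb h0 (by positivity)
    refine h2.trans (le_of_eq ?_)
    field_simp
  -- quadratic estimate at u₀
  have hquad : ∀ w ∈ closedBall u₀ ρ,
      ‖F w - F u₀ - DF u₀ (w - u₀)‖ ≤ L / 2 * ‖w - u₀‖ ^ 2 :=
    fun w hw => quad_bound U u₀ w ρ L hball F DF hdiff
      (fun z hz => hlip z hz u₀ hu₀mem) hw
  -- N maps the ball into itself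
  have hmaps : ∀ w ∈ closedBall u₀ ρ, N w ∈ closedBall u₀ ρ := by
    intro w hw
    have hwn : ‖w - u₀‖ ≤ ρ := by simpa [dist_eq_norm] using hw
    have h1 : N w - u₀ = e.symm (DF u₀ (w - u₀) - F w) := by
      have := hNdiff w u₀
      have hNu₀ : N u₀ = u₀ - e.symm (F u₀) := rfl
      rw [hNu₀] at this
      have : N w - u₀ = e.symm (DF u₀ (w - u₀) - (F w - F u₀)) - e.symm (F u₀) := by
        rw [← this]; abel
      rw [this, ← map_sub]
      congr 1; abel
    have h2 : ‖DF u₀ (w - u₀) - F w‖ ≤ L / 2 * ρ ^ 2 + r := by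
      have heq : DF u₀ (w - u₀) - F w = -(F w - F u₀ - DF u₀ (w - u₀)) - F u₀ := by abel
      rw [heq]
      refine (norm_sub_le _ _).trans ?_
      rw [norm_neg]
      have := hquad w hw
      have hsq : L / 2 * ‖w - u₀‖ ^ 2 ≤ L / 2 * ρ ^ 2 := by
        have hm := mul_le_mul hwn hwn (norm_nonneg _) hρ.le
        nlinarith
      linarith
    simp only [mem_closedBall, dist_eq_norm, h1]
    calc ‖(e.symm : W →L[ℝ] V) (DF u₀ (w - u₀) - F w)‖
        ≤ (1 / α) * (L / 2 * ρ ^ 2 + r) := by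
          refine ((e.symm : W →L[ℝ] V).le_opNorm _).trans ?_
          exact mul_le_mul hinv h2 (norm_nonneg _) (by positivity)
      _ ≤ ρ := by
          have heq2 : 1 / α * (L / 2 * ρ ^ 2 + r) = r / α + L / (2 * α) * ρ ^ 2 := by
            field_simp; ring
          rw [heq2]; linarith
  -- set up the contraction on the closed ball
  set s := closedBall u₀ ρ with hs
  have hsne : s.Nonempty := ⟨u₀, hu₀mem⟩
  haveI : Nonempty s := hsne.to_subtype
  have hclosed : IsClosed s := isClosed_closedBall
  haveI : CompleteSpace s := hclosed.completeSpace_coe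
  set q : NNReal := ⟨L / α * ρ, by positivity⟩ with hqdef
  set f : s → s := fun x => ⟨N x.1, hmaps x.1 x.2⟩ with hf
  have hlipf : LipschitzWith q f := by
    refine LipschitzWith.of_dist_le_mul fun x y => ?_
    have := hcontr x.1 x.2 y.1 y.2
    simp only [hf, Subtype.dist_eq, dist_eq_norm]
    exact this
  have hC : ContractingWith q f := ⟨by exact_mod_cast hq, hlipf⟩
  set u : s := hC.fixedPoint f with hu
  have hufix : f u = u := hC.fixedPoint_isFixedPt
  -- fixed points of N in s correspond to zeros of F
  have hiff : ∀ w : V, N w = w ↔ F w = 0 := by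
    intro w
    constructor
    · intro h
      have : e.symm (F w) = 0 := by
        have : w - e.symm (F w) = w := h
        have h2 : e.symm (F w) = w - (w - e.symm (F w)) := by abel
        rw [h2, this]; abel
      have := congrArg e this
      simpa using this
    · intro h; simp [hN, h]
  refine ⟨⟨u.1, ⟨u.2, ?_⟩, ?_⟩, hmaps, hcontr⟩
  · rw [← hiff]
    exact congrArg Subtype.val hufix
  · rintro y ⟨hy, hFy⟩
    have hyfix : f ⟨y, hy⟩ = ⟨y, hy⟩ := by
      apply Subtype.ext
      exact (hiff y).mpr hFy
    have := hC.fixedPoint_unique hyfix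
    exact congrArg Subtype.val this
end

section
/- Let V and W be real Banach spaces, let U ⊆ V be open, let ũ ∈ U and ρ > 0 be such that the closed ball B_ρ := {w ∈ V : ‖w − ũ‖ ≤ ρ} is contained in U. Let F : V → W be Fréchet differentiable on U with ‖F(ũ)‖ ≤ r, let DF(ũ) be a continuous linear isomorphism from V onto W with ‖DF(ũ)⁻¹‖ ≤ 1/α for some α > 0, and suppose ‖DF(w) − DF(z)‖ ≤ L‖w − z‖ for all w, z ∈ B_ρ with some L ≥ 0. Then for every w ∈ B_ρ, the Newton map N(w) := w − DF(ũ)⁻¹(F(w)) satisfies ‖N(w) − ũ‖ ≤ r/α + (L/(2α))ρ². -/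
open Metric

/-- Self-mapping estimate for the Newton map (Step 1 in the proof of Theorem 3.2). -/
theorem stmt_2
    {V W : Type*} [NormedAddCommGroup V] [NormedSpace ℝ V] [CompleteSpace V]
    [NormedAddCommGroup W] [NormedSpace ℝ W] [CompleteSpace W]
    (U : Set V) (hU : IsOpen U)
    (u₀ : V) (hu₀ : u₀ ∈ U) (ρ : ℝ) (hρ : 0 < ρ)
    (hball : closedBall u₀ ρ ⊆ U)
    (F : V → W) (DF : V → V →L[ℝ] W)
    (hdiff : ∀ x ∈ U, HasFDerivAt F (DF x) x)
    (r α L : ℝ) (hr : 0 ≤ r) (hα : 0 < α) (hL : 0 ≤ L)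
    (hres : ‖F u₀‖ ≤ r)
    (e : V ≃L[ℝ] W) (he : (e : V →L[ℝ] W) = DF u₀)
    (hinv : ‖(e.symm : W →L[ℝ] V)‖ ≤ 1 / α)
    (hlip : ∀ w ∈ closedBall u₀ ρ, ∀ z ∈ closedBall u₀ ρ,
      ‖DF w - DF z‖ ≤ L * ‖w - z‖) :
    ∀ w ∈ closedBall u₀ ρ,
      ‖(w - e.symm (F w)) - u₀‖ ≤ r / α + L / (2 * α) * ρ ^ 2 := by
  intro w hw
  set v : V := w - u₀ with hv
  have hvρ : ‖v‖ ≤ ρ := by simpa [hv, dist_eq_norm] using hw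
  set γ : ℝ → V := fun t => u₀ + t • v with hγ
  have hγmem : ∀ t ∈ Set.Icc (0:ℝ) 1, γ t ∈ closedBall u₀ ρ := by
    intro t ht
    have : ‖t • v‖ ≤ ρ := by
      rw [norm_smul, Real.norm_eq_abs, abs_of_nonneg ht.1]
      calc t * ‖v‖ ≤ 1 * ρ :=
            mul_le_mul ht.2 hvρ (norm_nonneg _) zero_le_one
        _ = ρ := one_mul ρ
    simpa [hγ, dist_eq_norm] using this
  set g : ℝ → W := fun t => F (γ t) - t • (DF u₀ v) with hg
  set g' : ℝ → W := fun t => (DF (γ t) - DF u₀) v with hg'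
  have hderiv : ∀ t ∈ Set.Icc (0:ℝ) 1, HasDerivAt g (g' t) t := by
    intro t ht
    have h1 : HasDerivAt γ v t := by
      simpa [hγ] using ((hasDerivAt_id t).smul_const v).const_add u₀
    have h2 : HasDerivAt (fun s => F (γ s)) (DF (γ t) v) t :=
      (hdiff (γ t) (hball (hγmem t ht))).comp_hasDerivAt t h1
    have h3 : HasDerivAt (fun s : ℝ => s • (DF u₀ v)) (DF u₀ v) t := by
      simpa using (hasDerivAt_id t).smul_const (DF u₀ v)
    simpa [hg, hg', Pi.sub_def] using h2.sub h3
  have hcont : ContinuousOn g' (Set.Icc (0:ℝ) 1) := by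
    have hlipDF : LipschitzOnWith (Real.toNNReal (L * ‖v‖))
        (fun t => DF (γ t)) (Set.Icc (0:ℝ) 1) := by
      apply LipschitzOnWith.of_dist_le_mul
      intro t ht s hs
      have h2 : ‖γ t - γ s‖ = |t - s| * ‖v‖ := by
        simp [hγ, add_sub_add_left_eq_sub, ← sub_smul, norm_smul]
      have h1 : dist (DF (γ t)) (DF (γ s)) ≤ L * ‖γ t - γ s‖ := by
        simpa [dist_eq_norm] using hlip (γ t) (hγmem t ht) (γ s) (hγmem s hs)
      rw [h2] at h1
      calc dist (DF (γ t)) (DF (γ s)) ≤ L * (|t - s| * ‖v‖) := h1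
        _ = (L * ‖v‖) * dist t s := by rw [Real.dist_eq]; ring
        _ = (Real.toNNReal (L * ‖v‖) : ℝ) * dist t s := by
            rw [Real.coe_toNNReal _ (mul_nonneg hL (norm_nonneg _))]
    exact (hlipDF.continuousOn.sub continuousOn_const).clm_apply continuousOn_const
  have hint : ∫ t in (0:ℝ)..1, g' t = g 1 - g 0 :=
    intervalIntegral.integral_eq_sub_of_hasDerivAt
      (fun t ht => hderiv t (by simpa [Set.uIcc_of_le (zero_le_one' ℝ)] using ht))
      ((by rwa [Set.uIcc_of_le (zero_le_one' ℝ)] : ContinuousOn g' (Set.uIcc (0:ℝ) 1)).intervalIntegrable)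
  have hbound : ‖g 1 - g 0‖ ≤ L / 2 * ‖v‖ ^ 2 := by
    rw [← hint]
    have hle : ∀ t ∈ Set.uIoc (0:ℝ) 1, ‖g' t‖ ≤ L * ‖v‖ ^ 2 * t := by
      intro t ht
      rw [Set.uIoc_of_le (zero_le_one' ℝ)] at ht
      have htI : t ∈ Set.Icc (0:ℝ) 1 := ⟨ht.1.le, ht.2⟩
      have h1 : ‖g' t‖ ≤ ‖DF (γ t) - DF u₀‖ * ‖v‖ := (DF (γ t) - DF u₀).le_opNorm v
      have h2 : ‖DF (γ t) - DF u₀‖ ≤ L * (t * ‖v‖) := by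
        have := hlip (γ t) (hγmem t htI) u₀ (by simpa using hρ.le)
        simpa [hγ, norm_smul, abs_of_nonneg ht.1.le] using this
      calc ‖g' t‖ ≤ (L * (t * ‖v‖)) * ‖v‖ :=
            h1.trans (mul_le_mul_of_nonneg_right h2 (norm_nonneg _))
        _ = L * ‖v‖ ^ 2 * t := by ring
    have hint2 : IntervalIntegrable (fun t => L * ‖v‖ ^ 2 * t) MeasureTheory.volume 0 1 :=
      (continuous_const.mul continuous_id).intervalIntegrable 0 1
    calc ‖∫ t in (0:ℝ)..1, g' t‖ ≤ |∫ t in (0:ℝ)..1, L * ‖v‖ ^ 2 * t| :=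
          intervalIntegral.norm_integral_le_abs_of_norm_le
            ((MeasureTheory.ae_restrict_iff' measurableSet_uIoc).mpr
              (MeasureTheory.ae_of_all _ hle)) hint2
      _ = ∫ t in (0:ℝ)..1, L * ‖v‖ ^ 2 * t :=
          abs_of_nonneg (intervalIntegral.integral_nonneg zero_le_one
            fun t ht => by have h0 := ht.1; positivity)
      _ = L * ‖v‖ ^ 2 * ∫ t in (0:ℝ)..1, t := by
          rw [intervalIntegral.integral_const_mul]
      _ = L / 2 * ‖v‖ ^ 2 := by rw [integral_id]; ring
  have hgval : g 1 - g 0 = F w - F u₀ - DF u₀ v := by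
    simp [hg, hγ, hv]
    abel
  have hkey : ‖F w - F u₀ - DF u₀ v‖ ≤ L / 2 * ‖v‖ ^ 2 := hgval ▸ hbound
  have heq : (w - e.symm (F w)) - u₀ = e.symm (DF u₀ v - F w) := by
    have : e.symm (DF u₀ v) = v := by
      rw [← he]; exact e.symm_apply_apply v
    rw [map_sub, this, hv]; abel
  rw [heq]
  have h1 : ‖(e.symm : W →L[ℝ] V) (DF u₀ v - F w)‖
      ≤ ‖(e.symm : W →L[ℝ] V)‖ * ‖DF u₀ v - F w‖ :=
    (e.symm : W →L[ℝ] V).le_opNorm _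
  have h2 : ‖DF u₀ v - F w‖ ≤ r + L / 2 * ρ ^ 2 := by
    have : DF u₀ v - F w = -(F u₀) - (F w - F u₀ - DF u₀ v) := by abel
    rw [this]
    calc ‖-(F u₀) - (F w - F u₀ - DF u₀ v)‖ ≤ ‖-(F u₀)‖ + ‖F w - F u₀ - DF u₀ v‖ :=
          norm_sub_le _ _
      _ ≤ r + L / 2 * ‖v‖ ^ 2 := by rw [norm_neg]; exact add_le_add hres hkey
      _ ≤ r + L / 2 * ρ ^ 2 := by
          gcongr
  calc ‖(e.symm : W →L[ℝ] V) (DF u₀ v - F w)‖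
      ≤ (1 / α) * (r + L / 2 * ρ ^ 2) := by
        refine h1.trans (mul_le_mul hinv h2 (norm_nonneg _) (by positivity))
    _ = r / α + L / (2 * α) * ρ ^ 2 := by field_simp
end

section
/- Let V be a real normed vector space with topological dual V*, let ũ ∈ V, ρ > 0, and let B_ρ := {w ∈ V : ‖w − ũ‖ ≤ ρ} be the closed ball of radius ρ centred at ũ, contained in an open set U ⊆ V. Let F : V → V* be Fréchet differentiable on U with ‖F(ũ)‖_{V*} ≤ r and ‖DF(w) − DF(z)‖ ≤ L‖w − z‖ for all w, z ∈ B_ρ (L ≥ 0). Let J : V → ℝ be Fréchet differentiable on U with ‖DJ(w) − DJ(z)‖_{V*} ≤ M‖w − z‖ for all w, z ∈ B_ρ (M ≥ 0). Define the bilinear form B(w,v) := (DF(ũ)w)(v) and assume B(v,v) ≥ α‖v‖² for all v ∈ V with some α > 0. Let u ∈ B_ρ satisfy F(u) = 0, assume there exists z ∈ V with B(v,z) = DJ(ũ)(v) for all v ∈ V, let z_h ∈ V be arbitrary, and define the adjoint residual G(v) := DJ(ũ)(v) − B(v, z_h) with dual norm ‖G‖. Then |J(u) − J(ũ)| ≤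 E, where E := |F(ũ)(z_h)| + (1/2)Lρ²‖z_h‖ + (r + (1/2)Lρ²)·α⁻¹‖G‖ + (1/2)Mρ². -/
open Metric Set

/-- Quadratic mean-value bound: if `‖φ' t‖ ≤ K * t` on `[0,1]`, then `‖φ 1 - φ 0‖ ≤ K / 2`. -/
lemma quad_mvt {E : Type*} [NormedAddCommGroup E] [NormedSpace ℝ E] {φ φ' : ℝ → E} {K : ℝ}
    (h : ∀ t ∈ Icc (0:ℝ) 1, HasDerivWithinAt φ (φ' t) (Icc (0:ℝ) 1) t)
    (hb : ∀ t ∈ Ico (0:ℝ) 1, ‖φ' t‖ ≤ K * t) :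
    ‖φ 1 - φ 0‖ ≤ K / 2 := by
  have key := image_norm_le_of_norm_deriv_right_le_deriv_boundary
    (f := fun t => φ t - φ 0) (f' := φ') (a := 0) (b := 1)
    (B := fun t => K * t ^ 2 / 2) (B' := fun t => K * t)
    (fun x hx => ((h x hx).sub_const (φ 0)).continuousWithinAt)
    (fun x hx => (((h x (Ico_subset_Icc_self hx)).sub_const
      (φ 0)).mono_of_mem_nhdsWithin (Icc_mem_nhdsGE_of_mem hx)))
    (by simp)
    (fun x => by
      have := ((hasDerivAt_pow 2 x).const_mul K).div_const 2
      exact this.congr_deriv (by simp; ring))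
    hb
  have := key (right_mem_Icc.2 zero_le_one)
  simpa using this

/-- Taylor remainder bound for a map with Lipschitz derivative on a closed ball. -/
lemma taylor_rem {V E : Type*} [NormedAddCommGroup V] [NormedSpace ℝ V]
    [NormedAddCommGroup E] [NormedSpace ℝ E]
    (u₀ : V) (ρ : ℝ) (U : Set V) (hball : closedBall u₀ ρ ⊆ U)
    (f : V → E) (f' : V → V →L[ℝ] E)
    (hdiff : ∀ x ∈ U, HasFDerivAt f (f' x) x)
    (L : ℝ)
    (hlip : ∀ w ∈ closedBall u₀ ρ, ∀ z ∈ closedBall u₀ ρ, ‖f' w - f' z‖ ≤ L * ‖w - z‖)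
    (u : V) (hu : u ∈ closedBall u₀ ρ) :
    ‖f u - f u₀ - f' u₀ (u - u₀)‖ ≤ L * ‖u - u₀‖ ^ 2 / 2 := by
  set e := u - u₀ with he
  have hu₀ : u₀ ∈ closedBall u₀ ρ := mem_closedBall_self (by
    have := mem_closedBall.1 hu
    have := dist_nonneg (x := u) (y := u₀)
    linarith)
  have hmem : ∀ t ∈ Icc (0:ℝ) 1, u₀ + t • e ∈ closedBall u₀ ρ := by
    intro t ht
    rw [mem_closedBall, dist_eq_norm]
    have hnorm : ‖u₀ + t • e - u₀‖ = t * ‖e‖ := by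
      rw [add_sub_cancel_left, norm_smul, Real.norm_eq_abs, abs_of_nonneg ht.1]
    rw [hnorm]
    have heρ : ‖e‖ ≤ ρ := by
      rw [he, ← dist_eq_norm]; exact mem_closedBall.1 hu
    calc t * ‖e‖ ≤ 1 * ρ := by
          apply mul_le_mul ht.2 heρ (norm_nonneg _) zero_le_one
      _ = ρ := one_mul ρ
  have hpath : ∀ t : ℝ, HasDerivAt (fun s : ℝ => u₀ + s • e) e t := by
    intro t
    have := ((hasDerivAt_id t).smul_const e).const_add u₀
    simpa using this
  have hφ : ∀ t ∈ Icc (0:ℝ) 1,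
      HasDerivWithinAt (fun s : ℝ => f (u₀ + s • e) - s • f' u₀ e)
        (f' (u₀ + t • e) e - f' u₀ e) (Icc (0:ℝ) 1) t := by
    intro t ht
    have h1 : HasDerivAt (fun s : ℝ => f (u₀ + s • e)) (f' (u₀ + t • e) e) t :=
      (hdiff _ (hball (hmem t ht))).comp_hasDerivAt t (hpath t)
    have h2 : HasDerivAt (fun s : ℝ => s • f' u₀ e) (f' u₀ e) t := by
      simpa using (hasDerivAt_id t).smul_const (f' u₀ e)
    exact (h1.sub h2).hasDerivWithinAt
  have hbd : ∀ t ∈ Ico (0:ℝ) 1, ‖f' (u₀ + t • e) e - f' u₀ e‖ ≤ (L * ‖e‖ ^ 2) * t := by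
    intro t ht
    have h1 : f' (u₀ + t • e) e - f' u₀ e = (f' (u₀ + t • e) - f' u₀) e := by simp
    rw [h1]
    calc ‖(f' (u₀ + t • e) - f' u₀) e‖ ≤ ‖f' (u₀ + t • e) - f' u₀‖ * ‖e‖ :=
          ContinuousLinearMap.le_opNorm _ _
      _ ≤ (L * ‖u₀ + t • e - u₀‖) * ‖e‖ := by
          apply mul_le_mul_of_nonneg_right _ (norm_nonneg e)
          exact hlip _ (hmem t (Ico_subset_Icc_self ht)) _ hu₀
      _ = (L * ‖e‖ ^ 2) * t := by
          rw [add_sub_cancel_left, norm_smul, Real.norm_eq_abs, abs_of_nonneg ht.1]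
          ring
  have key := quad_mvt hφ hbd
  have h1 : u₀ + (1:ℝ) • e = u := by rw [he]; simp
  have h0 : u₀ + (0:ℝ) • e = u₀ := by simp
  rw [h1, h0] at key
  calc ‖f u - f u₀ - f' u₀ e‖ = ‖f u - f' u₀ e - f u₀‖ := by rw [sub_right_comm]
    _ ≤ L * ‖e‖ ^ 2 / 2 := by simpa using key

set_option maxHeartbeats 1000000 in
/-- Certified adjoint-enhanced enclosure for a quantity of interest (Theorem 8.3). -/
theorem stmt_12
    {V : Type*} [NormedAddCommGroup V] [NormedSpace ℝ V]
    (u₀ : V) (ρ : ℝ) (hρ : 0 < ρ)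
    (U : Set V) (hU : IsOpen U) (hball : closedBall u₀ ρ ⊆ U)
    (F : V → V →L[ℝ] ℝ) (DF : V → V →L[ℝ] V →L[ℝ] ℝ)
    (hFdiff : ∀ x ∈ U, HasFDerivAt F (DF x) x)
    (r : ℝ) (hres : ‖F u₀‖ ≤ r)
    (L : ℝ) (hL : 0 ≤ L)
    (hFlip : ∀ w ∈ closedBall u₀ ρ, ∀ z ∈ closedBall u₀ ρ,
      ‖DF w - DF z‖ ≤ L * ‖w - z‖)
    (J : V → ℝ) (DJ : V → V →L[ℝ] ℝ)
    (hJdiff : ∀ x ∈ U, HasFDerivAt J (DJ x) x)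
    (M : ℝ) (hM : 0 ≤ M)
    (hJlip : ∀ w ∈ closedBall u₀ ρ, ∀ z ∈ closedBall u₀ ρ,
      ‖DJ w - DJ z‖ ≤ M * ‖w - z‖)
    (α : ℝ) (hα : 0 < α)
    (hcoer : ∀ v : V, α * ‖v‖ ^ 2 ≤ DF u₀ v v)
    (u : V) (hu : u ∈ closedBall u₀ ρ) (hFu : F u = 0)
    (z : V) (hz : ∀ v : V, DF u₀ v z = DJ u₀ v)
    (z_h : V) :
    |J u - J u₀| ≤
      |F u₀ z_h| + 1 / 2 * L * ρ ^ 2 * ‖z_h‖ +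
        (r + 1 / 2 * L * ρ ^ 2) * α⁻¹ * ‖DJ u₀ - (DF u₀).flip z_h‖ +
        1 / 2 * M * ρ ^ 2 := by
  set e := u - u₀ with he_def
  clear_value e
  have heρ : ‖e‖ ≤ ρ := by rw [he_def, ← dist_eq_norm]; exact mem_closedBall.1 hu
  have he2 : ‖e‖ ^ 2 ≤ ρ ^ 2 := by
    apply sq_le_sq' _ heρ; linarith [norm_nonneg e]
  -- Taylor remainders
  set RF : V →L[ℝ] ℝ := F u - F u₀ - DF u₀ e with hRF_def
  clear_value RF
  have hRF : ‖RF‖ ≤ 1 / 2 * L * ρ ^ 2 := by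
    have := taylor_rem u₀ ρ U hball F DF hFdiff L hFlip u hu
    rw [← he_def, ← hRF_def] at this
    calc ‖RF‖ ≤ L * ‖e‖ ^ 2 / 2 := this
      _ ≤ 1 / 2 * L * ρ ^ 2 := by nlinarith
  set RJ : ℝ := J u - J u₀ - DJ u₀ e with hRJ_def
  clear_value RJ
  have hRJ : |RJ| ≤ 1 / 2 * M * ρ ^ 2 := by
    have := taylor_rem u₀ ρ U hball J DJ hJdiff M hJlip u hu
    rw [← he_def] at this
    calc |RJ| = ‖J u - J u₀ - DJ u₀ e‖ := by rw [hRJ_def, Real.norm_eq_abs]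
      _ ≤ M * ‖e‖ ^ 2 / 2 := this
      _ ≤ 1 / 2 * M * ρ ^ 2 := by nlinarith
  have hr0 : 0 ≤ r := le_trans (norm_nonneg _) hres
  -- linearised equation: DF u₀ e = -(F u₀) - RF (since F u = 0)
  have hlin : DF u₀ e = -(F u₀) - RF := by
    rw [hRF_def, hFu]; abel
  -- a priori error bound
  have herr : ‖e‖ ≤ (r + 1 / 2 * L * ρ ^ 2) * α⁻¹ := by
    have h1 : α * ‖e‖ ^ 2 ≤ DF u₀ e e := hcoer e
    have h2 : DF u₀ e e ≤ (r + 1 / 2 * L * ρ ^ 2) * ‖e‖ := by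
      have : DF u₀ e e = -(F u₀ e) - RF e := by rw [hlin]; simp
      rw [this]
      have hb1 : |F u₀ e| ≤ ‖F u₀‖ * ‖e‖ := by
        rw [← Real.norm_eq_abs]; exact (F u₀).le_opNorm e
      have hb2 : |RF e| ≤ ‖RF‖ * ‖e‖ := by
        rw [← Real.norm_eq_abs]; exact RF.le_opNorm e
      have hb3 : -(F u₀ e) - RF e ≤ |F u₀ e| + |RF e| := by
        have := abs_le.1 (le_refl |F u₀ e|)
        have := abs_le.1 (le_refl |RF e|)
        cases abs_cases (F u₀ e) with
        | inl h => cases abs_cases (RF e) with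
          | inl h2 => linarith [h.1, h2.1, abs_nonneg (F u₀ e), abs_nonneg (RF e)]
          | inr h2 => linarith [h.1, h2.1, abs_nonneg (F u₀ e)]
        | inr h => cases abs_cases (RF e) with
          | inl h2 => linarith [h.1, h2.1, abs_nonneg (RF e)]
          | inr h2 => linarith [h.1, h2.1]
      have hb4 : ‖F u₀‖ * ‖e‖ + ‖RF‖ * ‖e‖ ≤ (r + 1 / 2 * L * ρ ^ 2) * ‖e‖ := by
        have := norm_nonneg e
        nlinarith
      linarith
    rcases eq_or_lt_of_le (norm_nonneg e) with h0 | h0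
    · rw [← h0]
      positivity
    · have h3 : α * ‖e‖ ≤ r + 1 / 2 * L * ρ ^ 2 := by
        have := mul_lt_mul_of_pos_left h0 h0
        nlinarith [mul_le_mul_of_nonneg_right (le_trans h1 h2) (le_of_lt h0)]
      rw [mul_comm _ α⁻¹, ← div_eq_inv_mul, le_div_iff₀ hα]
      linarith [h3]
  set G : V →L[ℝ] ℝ := DJ u₀ - (DF u₀).flip z_h with hG_def
  clear_value G
  -- decomposition
  have hdec : J u - J u₀ = RJ + G e - F u₀ z_h - RF z_h := by
    have hGe : G e = DJ u₀ e - DF u₀ e z_h := by rw [hG_def]; simp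
    have hFz : DF u₀ e z_h = -(F u₀ z_h) - RF z_h := by rw [hlin]; simp
    have : DJ u₀ e = G e + DF u₀ e z_h := by rw [hGe]; ring
    rw [hRJ_def]
    rw [this, hFz]
    ring
  have hGe : |G e| ≤ ‖G‖ * ((r + 1 / 2 * L * ρ ^ 2) * α⁻¹) := by
    calc |G e| ≤ ‖G‖ * ‖e‖ := by rw [← Real.norm_eq_abs]; exact G.le_opNorm e
      _ ≤ ‖G‖ * ((r + 1 / 2 * L * ρ ^ 2) * α⁻¹) := by
          exact mul_le_mul_of_nonneg_left herr (norm_nonneg _)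
  have hRFz : |RF z_h| ≤ 1 / 2 * L * ρ ^ 2 * ‖z_h‖ := by
    calc |RF z_h| ≤ ‖RF‖ * ‖z_h‖ := by rw [← Real.norm_eq_abs]; exact RF.le_opNorm z_h
      _ ≤ 1 / 2 * L * ρ ^ 2 * ‖z_h‖ := mul_le_mul_of_nonneg_right hRF (norm_nonneg _)
  have htri : |J u - J u₀| ≤ |RJ| + |G e| + |F u₀ z_h| + |RF z_h| := by
    rw [hdec]
    calc |RJ + G e - F u₀ z_h - RF z_h| ≤ |RJ + G e - F u₀ z_h| + |RF z_h| := abs_sub _ _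
      _ ≤ |RJ + G e| + |F u₀ z_h| + |RF z_h| := by linarith [abs_sub (RJ + G e) (F u₀ z_h)]
      _ ≤ |RJ| + |G e| + |F u₀ z_h| + |RF z_h| := by linarith [abs_add_le RJ (G e)]
  calc |J u - J u₀| ≤ |RJ| + |G e| + |F u₀ z_h| + |RF z_h| := htri
    _ ≤ 1 / 2 * M * ρ ^ 2 + ‖G‖ * ((r + 1 / 2 * L * ρ ^ 2) * α⁻¹) + |F u₀ z_h|
        + 1 / 2 * L * ρ ^ 2 * ‖z_h‖ := by linarith
    _ = |F u₀ z_h| + 1 / 2 * L * ρ ^ 2 * ‖z_h‖ +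
        (r + 1 / 2 * L * ρ ^ 2) * α⁻¹ * ‖G‖ + 1 / 2 * M * ρ ^ 2 := by ring
end
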